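/- Consider a max-min LP in which some agent v is adjacent to more than one objective. Replace v by |K_v| copies, one for each objective k ∈ K_v, replacing each constraint containing v by |K_v| copies each containing a distinct copy of v (coefficients unchanged). Then the optimum of the transformed instance equals the optimum of the original instance. -/

import Mathlib

open Finset

/-- Splitting an agent `v₀` adjacent to several objectives into one copy per
adjacent objective (each constraint containing `v₀` being replaced by one copy
per objective, coefficients unchanged) preserves the optimum of the max-min LP.
The optimum is expressed as the supremum of achievable utilities
`min_k Σ_v c_{kv} x_v` over feasible solutions (`A x ≤ 1`, `x ≥ 0`). -/
theorem stmt_2 {V I K : Type*} [Fintype V] [Fintype I] [Fintype K]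
    [DecidableEq V] [DecidableEq K] [Nonempty K]
    (A : I → V → ℝ) (C : K → V → ℝ)
    (hA : ∀ i v, 0 ≤ A i v) (hC : ∀ k v, 0 ≤ C k v)
    (v₀ : V) (hmulti : 1 < Fintype.card {k : K // 0 < C k v₀}) :
    sSup {w : ℝ | ∃ x : V → ℝ, (∀ v, 0 ≤ x v) ∧
        (∀ i, ∑ v, A i v * x v ≤ 1) ∧
        w = univ.inf' univ_nonempty (fun k => ∑ v, C k v * x v)} =
    sSup {w : ℝ | ∃ x : ({u : V // u ≠ v₀} ⊕ {k : K // 0 < C k v₀}) → ℝ,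
        (∀ v, 0 ≤ x v) ∧
        (∀ p : I × {k : K // 0 < C k v₀},
          (∑ u : {u : V // u ≠ v₀}, A p.1 u.1 * x (Sum.inl u)) +
            A p.1 v₀ * x (Sum.inr p.2) ≤ 1) ∧
        w = univ.inf' univ_nonempty (fun k =>
          (∑ u : {u : V // u ≠ v₀}, C k u.1 * x (Sum.inl u)) +
          (∑ k' : {k' : K // 0 < C k' v₀},
            (if k'.1 = k then C k v₀ else 0) * x (Sum.inr k')))} := by
  have hKp : Nonempty {k : K // 0 < C k v₀} :=
    Fintype.card_pos_iff.mp (by omega)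
  -- splitting a sum over V at v₀
  have hsplit : ∀ f : V → ℝ, ∑ v, f v = (∑ u : {u : V // u ≠ v₀}, f u.1) + f v₀ := by
    intro f
    rw [← Finset.sum_subtype (univ.erase v₀) (fun x => by simp) f,
      Finset.sum_erase_add _ _ (mem_univ v₀)]
  -- the "copy" sum
  have hcopy : ∀ (k : K) (z : {k' : K // 0 < C k' v₀} → ℝ),
      ∑ k' : {k' : K // 0 < C k' v₀}, (if k'.1 = k then C k v₀ else 0) * z k' =
        if h : 0 < C k v₀ then C k v₀ * z ⟨k, h⟩ else 0 := by
    intro k z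
    by_cases h : 0 < C k v₀
    · rw [dif_pos h,
        Finset.sum_eq_single (⟨k, h⟩ : {k' : K // 0 < C k' v₀}) (fun b _ hb => by
          rw [if_neg (fun hb' : b.1 = k => hb (Subtype.ext hb')), zero_mul])
          (fun h' => absurd (mem_univ _) h'), if_pos rfl]
    · rw [dif_neg h]
      refine Finset.sum_eq_zero fun k' _ => ?_
      rw [if_neg (fun hk' : k'.1 = k => h (hk' ▸ k'.2)), zero_mul]
  congr 1
  ext w
  simp only [Set.mem_setOf_eq]
  constructor
  · rintro ⟨x, hx0, hxI, rfl⟩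
    refine ⟨Sum.elim (fun u => x u.1) (fun _ => x v₀), ?_, ?_, ?_⟩
    · rintro (u | k') <;> simp [hx0]
    · intro p
      simpa using (hsplit (fun v => A p.1 v * x v) ▸ hxI p.1)
    · refine Finset.inf'_congr _ rfl fun k _ => ?_
      rw [hsplit (fun v => C k v * x v)]
      simp only [Sum.elim_inl, Sum.elim_inr]
      congr 1
      rw [hcopy k (fun _ => x v₀)]
      by_cases h : 0 < C k v₀
      · rw [dif_pos h]
      · rw [dif_neg h, (by linarith [hC k v₀] : C k v₀ = 0), zero_mul]
  · rintro ⟨y, hy0, hyI, rfl⟩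
    set g : K → ℝ := fun k =>
      (∑ u : {u : V // u ≠ v₀}, C k u.1 * y (Sum.inl u)) +
      (∑ k' : {k' : K // 0 < C k' v₀},
        (if k'.1 = k then C k v₀ else 0) * y (Sum.inr k')) with hg
    set M : ℝ := univ.sup' univ_nonempty (fun k' : {k' : K // 0 < C k' v₀} => y (Sum.inr k'))
      with hM
    obtain ⟨ks, -, hks⟩ := Finset.exists_mem_eq_sup' (univ_nonempty)
      (fun k' : {k' : K // 0 < C k' v₀} => y (Sum.inr k'))
    have hM0 : 0 ≤ M := le_trans (hy0 (Sum.inr (Classical.arbitrary _)))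
      ((Finset.le_sup' (fun k' : {k' : K // 0 < C k' v₀} => y (Sum.inr k'))
        (mem_univ (Classical.arbitrary _))).trans_eq hM.symm)
    set x : V → ℝ := fun v => if h : v = v₀ then M else y (Sum.inl ⟨v, h⟩) with hx
    have hx0 : ∀ v, 0 ≤ x v := by
      intro v; by_cases h : v = v₀ <;> simp [hx, h, hM0, hy0]
    have hxu : ∀ u : {u : V // u ≠ v₀}, x u.1 = y (Sum.inl u) := by
      rintro ⟨u, hu⟩; simp [hx, hu]
    have hxv₀ : x v₀ = M := by simp [hx]
    set f : K → ℝ := fun k => ∑ v, C k v * x v with hf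
    have hksM : M = y (Sum.inr ks) := hM.trans hks
    have hleM : ∀ k' : {k' : K // 0 < C k' v₀}, y (Sum.inr k') ≤ M := fun k' =>
      (Finset.le_sup' (fun k'' : {k'' : K // 0 < C k'' v₀} => y (Sum.inr k''))
        (mem_univ k')).trans_eq hM.symm
    have hfg : ∀ k, g k ≤ f k := by
      intro k
      show g k ≤ ∑ v, C k v * x v
      rw [hsplit (fun v => C k v * x v), hxv₀]
      refine add_le_add (le_of_eq (Finset.sum_congr rfl fun u _ => by rw [hxu u])) ?_
      rw [hcopy k (fun k' => y (Sum.inr k'))]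
      by_cases h : 0 < C k v₀
      · rw [dif_pos h]
        exact mul_le_mul_of_nonneg_left (hleM _) (hC k v₀)
      · rw [dif_neg h, (by linarith [hC k v₀] : C k v₀ = 0), zero_mul]
    have hfeas : ∀ i, ∑ v, A i v * x v ≤ 1 := by
      intro i
      rw [hsplit (fun v => A i v * x v), hxv₀, hksM]
      calc (∑ u : {u : V // u ≠ v₀}, A i u.1 * x u.1) + A i v₀ * y (Sum.inr ks)
          = (∑ u : {u : V // u ≠ v₀}, A i u.1 * y (Sum.inl u)) + A i v₀ * y (Sum.inr ks) := by
            rw [Finset.sum_congr rfl fun u _ => by rw [hxu u]]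
        _ ≤ 1 := hyI (i, ks)
    set w' : ℝ := univ.inf' univ_nonempty f with hw'
    set w : ℝ := univ.inf' univ_nonempty g with hwdef
    have hww' : w ≤ w' := by
      refine Finset.le_inf' _ _ fun k _ => le_trans (Finset.inf'_le _ (mem_univ k)) (hfg k)
    have hw0 : 0 ≤ w := by
      refine Finset.le_inf' _ _ fun k _ => add_nonneg ?_ ?_
      · exact Finset.sum_nonneg fun u _ => mul_nonneg (hC k u.1) (hy0 _)
      · refine Finset.sum_nonneg fun k' _ => mul_nonneg ?_ (hy0 _)
        split <;> simp [hC]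
    have hw'0 : 0 ≤ w' := hw0.trans hww'
    set t : ℝ := w / w' with htdef
    have ht0 : 0 ≤ t := div_nonneg hw0 hw'0
    have htw' : t * w' = w := by
      rcases eq_or_lt_of_le hw'0 with h | h
      · have : w = 0 := le_antisymm (h ▸ hww') hw0
        simp [htdef, this]
      · rw [htdef, div_mul_cancel₀ _ (ne_of_gt h)]
    have ht1 : t ≤ 1 := by
      rcases eq_or_lt_of_le hw'0 with h | h
      · simp [htdef, ← h]
      · rw [htdef, div_le_one h]; exact hww'
    refine ⟨fun v => t * x v, fun v => mul_nonneg ht0 (hx0 v), ?_, ?_⟩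
    · intro i
      have : ∑ v, A i v * (t * x v) = t * ∑ v, A i v * x v := by
        rw [Finset.mul_sum]; exact Finset.sum_congr rfl fun v _ => by ring
      rw [this]
      calc t * ∑ v, A i v * x v ≤ t * 1 := mul_le_mul_of_nonneg_left (hfeas i) ht0
        _ ≤ 1 := by linarith
    · have h1 : ∀ k, ∑ v, C k v * (t * x v) = t * f k := by
        intro k; rw [hf, Finset.mul_sum]; exact Finset.sum_congr rfl fun v _ => by ring
      calc w = t * w' := htw'.symm
        _ = univ.inf' univ_nonempty (fun k => t * f k) :=
            (Finset.apply_inf'_eq_inf'_comp _ (t * ·) (fun a b => mul_min_of_nonneg a b ht0))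
        _ = univ.inf' univ_nonempty (fun k => ∑ v, C k v * (t * x v)) :=
            Finset.inf'_congr _ rfl fun k _ => (h1 k).symm
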